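/- Let J = {1,…,n} be a finite job set with processing times p_j ≥ 0, resource rates c_j ≥ 0, release times r_j ≥ 0, due dates d_j ∈ ℝ, and capacity C > 0. Let s : J → ℝ be a cumulative schedule with s_j ≥ r_j for all j (so in particular s_j ≥ 0). Then for every k ∈ J, the total tardiness satisfies Σ_{j∈J} max(0, s_j + p_j − d_j) ≥ max(0, (1/C) Σ_{j : d_j ≤ d_k} p_j c_j − d_k). -/

import Mathlib

open MeasureTheory Set

lemma integrable_ico_indicator (a b e : ℝ) :
    Integrable ((Set.Ico a b).indicator (fun _ => e)) volume :=
  (integrableOn_const measure_Ico_lt_top.ne).integrable_indicator measurableSet_Ico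

lemma integral_ico_indicator (a b e : ℝ) (hab : a ≤ b) :
    ∫ t, (Set.Ico a b).indicator (fun _ => e) t = e * (b - a) := by
  rw [MeasureTheory.integral_indicator_const e measurableSet_Ico, measureReal_def, Real.volume_Ico,
    ENNReal.toReal_ofReal (by linarith), smul_eq_mul, mul_comm]



/-- `s` is a cumulative schedule of the job set `J` with processing times `p`,
resource consumption rates `c`, and resource capacity `C`: at every time `t`,
the total rate of resource consumption of the jobs running at `t` is at most `C`. -/
def CumulativeSchedule {ι : Type*} (J : Finset ι) (p c : ι → ℝ) (C : ℝ) (s : ι → ℝ) : Prop :=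
  ∀ t : ℝ, ∑ j ∈ J.filter (fun j => s j ≤ t ∧ t < s j + p j), c j ≤ C

/-- Lemma 3: for any cumulative schedule respecting the release times, the total
tardiness is bounded below by `max(0, (1/C) ∑_{j : d j ≤ d k} p j * c j - d k)`
for every job `k`. -/
theorem stmt_3 {ι : Type*} (J : Finset ι) (p c r d : ι → ℝ) (C : ℝ)
    (hC : 0 < C)
    (hp : ∀ j ∈ J, 0 ≤ p j)
    (hc : ∀ j ∈ J, 0 ≤ c j)
    (hr : ∀ j ∈ J, 0 ≤ r j)
    (s : ι → ℝ)
    (hcum : CumulativeSchedule J p c C s)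
    (hs : ∀ j ∈ J, r j ≤ s j) :
    ∀ k ∈ J,
      max 0 ((1 / C) * ∑ j ∈ J.filter (fun j => d j ≤ d k), p j * c j - d k) ≤
        ∑ j ∈ J, max 0 (s j + p j - d j) := by
  classical
  intro k hk
  set S := J.filter (fun j => d j ≤ d k) with hS
  have hkS : k ∈ S := Finset.mem_filter.2 ⟨hk, le_refl _⟩
  obtain ⟨m, hmS, hmmax⟩ := S.exists_max_image (fun j => s j + p j) ⟨k, hkS⟩
  have hmJ : m ∈ S → m ∈ J := fun h => (Finset.mem_filter.1 h).1
  have hs0 : ∀ j ∈ J, 0 ≤ s j := fun j hj => le_trans (hr j hj) (hs j hj)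
  set T := s m + p m with hT
  have hT0 : 0 ≤ T := add_nonneg (hs0 m (hmJ hmS)) (hp m (hmJ hmS))
  -- the key area bound
  have key : ∑ j ∈ S, p j * c j ≤ C * T := by
    set f : ℝ → ℝ := fun t => ∑ j ∈ S, (Set.Ico (s j) (s j + p j)).indicator (fun _ => c j) t
      with hf
    have hint : Integrable f volume :=
      integrable_finset_sum _ (fun j _ => integrable_ico_indicator _ _ _)
    have hintg : ∫ t, f t = ∑ j ∈ S, p j * c j := by
      rw [integral_finset_sum _ (fun j _ => integrable_ico_indicator _ _ _)]
      refine Finset.sum_congr rfl fun j hj => ?_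
      have hjJ : j ∈ J := (Finset.mem_filter.1 hj).1
      rw [integral_ico_indicator _ _ _ (by linarith [hp j hjJ])]
      ring_nf
    have hbound : ∀ t, f t ≤ (Set.Ico 0 T).indicator (fun _ => C) t := by
      intro t
      by_cases ht : t ∈ Set.Ico 0 T
      · rw [Set.indicator_of_mem ht]
        have : f t = ∑ j ∈ S.filter (fun j => s j ≤ t ∧ t < s j + p j), c j := by
          rw [hf, Finset.sum_filter]
          refine Finset.sum_congr rfl fun j _ => ?_
          by_cases h : s j ≤ t ∧ t < s j + p j
          · rw [if_pos h, Set.indicator_of_mem (Set.mem_Ico.2 h)]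
          · rw [if_neg h, Set.indicator_of_notMem (fun hm => h (Set.mem_Ico.1 hm))]
        rw [this]
        refine le_trans (Finset.sum_le_sum_of_subset_of_nonneg ?_ ?_) (hcum t)
        · exact Finset.filter_subset_filter _ (Finset.filter_subset _ _)
        · intro j hj _; exact hc j (Finset.mem_filter.1 hj).1
      · rw [Set.indicator_of_notMem ht]
        have : f t = 0 := by
          rw [hf]
          refine Finset.sum_eq_zero fun j hj => ?_
          have hjJ : j ∈ J := (Finset.mem_filter.1 hj).1
          refine Set.indicator_of_notMem (fun hm => ht ?_) _
          obtain ⟨h1, h2⟩ := Set.mem_Ico.1 hm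
          refine Set.mem_Ico.2 ⟨le_trans (hs0 j hjJ) h1, lt_of_lt_of_le h2 ?_⟩
          exact hmmax j hj
        rw [this]
    have := MeasureTheory.integral_mono hint
      (integrable_ico_indicator 0 T C) hbound
    rw [hintg, integral_ico_indicator _ _ _ hT0] at this
    linarith
  have hdm : d m ≤ d k := (Finset.mem_filter.1 hmS).2
  have h1 : (1 / C) * ∑ j ∈ S, p j * c j - d k ≤ s m + p m - d m := by
    have : (1 / C) * ∑ j ∈ S, p j * c j ≤ T := by
      rw [div_mul_eq_mul_div, one_mul, div_le_iff₀ hC]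
      linarith [key]
    linarith
  have h2 : s m + p m - d m ≤ ∑ j ∈ J, max 0 (s j + p j - d j) := by
    refine le_trans (le_max_right 0 _) ?_
    exact Finset.single_le_sum (f := fun j => max 0 (s j + p j - d j)) (fun j _ => le_max_left 0 _) (hmJ hmS)
  have h3 : (0:ℝ) ≤ ∑ j ∈ J, max 0 (s j + p j - d j) :=
    Finset.sum_nonneg fun j _ => le_max_left 0 _
  exact max_le h3 (le_trans h1 h2)
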